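/- Let q0, n, k, ℓ, t, h, η, α be valid parameters of the TRS cryptosystem, and assume additionally that ℓ ≤ (√n − 3)/2. Let C_sub = TRS_{k,n}[α,t,h,η] ∩ F_{q0}^n be the F_{q0}-subfield subcode of the twisted Reed–Solomon code (an F_{q0}-linear code of length n). Then (C_sub)^{(⋆2)} = RS_{2k−1,n}[α], the F_{q0}-linear Reed–Solomon code of dimension 2k−1 with locators α. -/
import Mathlib


open Polynomial

/-- Evaluation vector: `ev_α(f) = (f(α₁),…,f(α_n))`. -/
noncomputable def evalVec {F : Type*} [Field F] {n : ℕ} (α : Fin n → F) (f : F[X]) :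
    Fin n → F :=
  fun i => f.eval (α i)

/-- The twisted polynomial with coefficient vector `u`:
`Σ_{i=0}^{k−1} u_i X^i + Σ_{j=1}^{ℓ} η_j u_{h_j} X^{k−1+t_j}`. -/
noncomputable def twistedPoly {F : Type*} [Field F] (k ℓ : ℕ) (t : Fin ℓ → ℕ)
    (h : Fin ℓ → Fin k) (η : Fin ℓ → F) (u : Fin k → F) : F[X] :=
  (∑ i : Fin k, Polynomial.C (u i) * Polynomial.X ^ (i : ℕ))
    + ∑ j : Fin ℓ, Polynomial.C (η j * u (h j)) * Polynomial.X ^ (k - 1 + t j)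

/-- The space of twisted polynomials `P_{k,n}[t,h,η]`. -/
def twistedPolySet (F : Type*) [Field F] (k ℓ : ℕ) (t : Fin ℓ → ℕ)
    (h : Fin ℓ → Fin k) (η : Fin ℓ → F) : Set F[X] :=
  { p | ∃ u : Fin k → F, p = twistedPoly k ℓ t h η u }

/-- The twisted Reed–Solomon code `TRS_{k,n}[α,t,h,η]`, as a subset of `F^n`. -/
def TRS {F : Type*} [Field F] {n : ℕ} (α : Fin n → F) (k ℓ : ℕ) (t : Fin ℓ → ℕ)
    (h : Fin ℓ → Fin k) (η : Fin ℓ → F) : Set (Fin n → F) :=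
  { c | ∃ u : Fin k → F, c = evalVec α (twistedPoly k ℓ t h η u) }

/-- The Reed–Solomon code `RS_{k,n}[α]`, as a subset of `F^n`. -/
def RS {F : Type*} [Field F] {n : ℕ} (α : Fin n → F) (k : ℕ) : Set (Fin n → F) :=
  { c | ∃ f : F[X], f.degree ≤ ((k - 1 : ℕ) : WithBot ℕ) ∧ c = evalVec α f }

section Aux

variable {F : Type*} [Field F] {k ℓ : ℕ} {t : Fin ℓ → ℕ} {h : Fin ℓ → Fin k} {η : Fin ℓ → F}

lemma twistedPoly_coeff (u : Fin k → F) (m : ℕ) :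
    (twistedPoly k ℓ t h η u).coeff m =
      (∑ i : Fin k, if m = (i : ℕ) then u i else 0)
      + ∑ j : Fin ℓ, if m = k - 1 + t j then η j * u (h j) else 0 := by
  unfold twistedPoly
  rw [Polynomial.coeff_add, Polynomial.finset_sum_coeff, Polynomial.finset_sum_coeff]
  refine congrArg₂ (· + ·) (Finset.sum_congr rfl fun i _ => ?_)
    (Finset.sum_congr rfl fun j _ => ?_) <;>
  · rw [Polynomial.coeff_C_mul, Polynomial.coeff_X_pow, mul_ite, mul_one, mul_zero]

lemma twistedPoly_coeff_lo (u : Fin k → F) (ht1 : ∀ j, 1 ≤ t j) {m : ℕ} (hm : m < k) :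
    (twistedPoly k ℓ t h η u).coeff m = u ⟨m, hm⟩ := by
  rw [twistedPoly_coeff]
  have e2 : (∑ j : Fin ℓ, if m = k - 1 + t j then η j * u (h j) else 0) = 0 :=
    Finset.sum_eq_zero fun j _ => if_neg (by have := ht1 j; omega)
  rw [e2, add_zero, Finset.sum_eq_single (⟨m, hm⟩ : Fin k)]
  · exact if_pos rfl
  · intro b _ hb
    exact if_neg fun hmb => hb (Fin.ext hmb.symm)
  · intro habs; exact absurd (Finset.mem_univ _) habs

lemma twistedPoly_coeff_hi (u : Fin k → F) (ht1 : ∀ j, 1 ≤ t j)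
    (htinj : Function.Injective t) (j0 : Fin ℓ) :
    (twistedPoly k ℓ t h η u).coeff (k - 1 + t j0) = η j0 * u (h j0) := by
  have hk : 0 < k := lt_of_le_of_lt (Nat.zero_le _) (h j0).isLt
  rw [twistedPoly_coeff]
  have e1 : (∑ i : Fin k, if k - 1 + t j0 = (i : ℕ) then u i else 0) = 0 :=
    Finset.sum_eq_zero fun i _ => if_neg (by have := i.isLt; have := ht1 j0; omega)
  rw [e1, zero_add, Finset.sum_eq_single j0]
  · exact if_pos rfl
  · intro j _ hj
    refine if_neg fun heq => hj (htinj ?_)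
    have h1 := ht1 j; have h2 := ht1 j0
    omega
  · intro habs; exact absurd (Finset.mem_univ _) habs

lemma twistedPoly_coeff_hooks_zero_hi (u : Fin k → F) (hz : ∀ j, u (h j) = 0)
    {m : ℕ} (hm : k ≤ m) :
    (twistedPoly k ℓ t h η u).coeff m = 0 := by
  rw [twistedPoly_coeff]
  have e1 : (∑ i : Fin k, if m = (i : ℕ) then u i else 0) = 0 :=
    Finset.sum_eq_zero fun i _ => if_neg (by have := i.isLt; omega)
  have e2 : (∑ j : Fin ℓ, if m = k - 1 + t j then η j * u (h j) else 0) = 0 :=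
    Finset.sum_eq_zero fun j _ => by rw [hz j, mul_zero, ite_self]
  rw [e1, e2, add_zero]

lemma twistedPoly_single (a : Fin k) (hna : ∀ j, h j ≠ a) :
    twistedPoly k ℓ t h η (Pi.single a 1) = Polynomial.X ^ (a : ℕ) := by
  have h2 : (∑ j : Fin ℓ, Polynomial.C (η j * (Pi.single a 1 : Fin k → F) (h j))
      * Polynomial.X ^ (k - 1 + t j) : F[X]) = 0 :=
    Finset.sum_eq_zero fun j _ => by
      rw [Pi.single_eq_of_ne (hna j), mul_zero, map_zero, zero_mul]
  have h1 : (∑ i : Fin k, Polynomial.C ((Pi.single a 1 : Fin k → F) i) * Polynomial.X ^ (i : ℕ) : F[X])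
      = Polynomial.X ^ (a : ℕ) := by
    rw [Finset.sum_eq_single a]
    · simp
    · intro b _ hb; rw [Pi.single_eq_of_ne hb, map_zero, zero_mul]
    · intro habs; exact absurd (Finset.mem_univ _) habs
  unfold twistedPoly
  rw [h1, h2, add_zero]

lemma sum_decomp (k ℓ r m : ℕ) (hD : 2*ℓ + 6 ≤ r) (hC : r + 2*ℓ + 1 ≤ k) (hm : m < 2*k - 1) :
    ∃ i j : ℕ, i + j = m ∧ i < k ∧ j < k ∧ (i < r ∨ r + ℓ ≤ i) ∧ (j < r ∨ r + ℓ ≤ j) := by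
  by_cases h1 : m ≤ 2*r - 2
  · exact ⟨m/2, m - m/2, by omega, by omega, by omega, by omega, by omega⟩
  · by_cases h2 : m ≤ k + r - 2
    · by_cases h3 : m ≤ 2*r + ℓ - 1
      · exact ⟨r + ℓ, m - (r + ℓ), by omega, by omega, by omega, by omega, by omega⟩
      · exact ⟨m - (r - 1), r - 1, by omega, by omega, by omega, by omega, by omega⟩
    · exact ⟨m/2, m - m/2, by omega, by omega, by omega, by omega, by omega⟩

end Aux


set_option maxHeartbeats 1600000 in
/-- square of the subfield subcode: for valid parameters of the TRS
cryptosystem with ℓ ≤ (√n − 3)/2, the Schur square (over F_{q0} = K 0) of the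
subfield subcode C_sub = TRS_{k,n}[α,t,h,η] ∩ F_{q0}^n is the Reed–Solomon code
RS_{2k−1,n}[α] = span_{F_{q0}}{ ev_α(X^i) : 0 ≤ i ≤ 2k−2 }. -/
theorem schurSquare_subfieldSubcode_eq_RS
    {F : Type*} [Field F] [Fintype F] {q0 n k ℓ r : ℕ}
    (hq0pp : ∃ p m : ℕ, p.Prime ∧ 0 < m ∧ q0 = p ^ m)
    (K : Fin (ℓ + 1) → Subfield F)
    (hcard : ∀ i : Fin (ℓ + 1), Nat.card (K i) = q0 ^ 2 ^ (i : ℕ))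
    (hchain : ∀ i : Fin ℓ, K i.castSucc < K i.succ)
    (htop : K (Fin.last ℓ) = ⊤)
    (hkn : k < n) (hnq0 : n ≤ q0 - 1)
    (hk1 : 2 * Real.sqrt n + 6 < (k : ℝ))
    (hk2 : (k : ℝ) ≤ (n : ℝ) / 2 - 2)
    (hℓ1 : ((n : ℝ) + 1) / ((k : ℝ) - Real.sqrt n) < (ℓ : ℝ) + 2)
    (hℓ2 : (ℓ : ℝ) + 2
            < min (min ((k : ℝ) + 3) (2 * (n : ℝ) / (k : ℝ))) (Real.sqrt n - 2))
    (hr : r = ⌈((n : ℝ) + 1) / ((ℓ : ℝ) + 2)⌉₊ + 2)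
    (t : Fin ℓ → ℕ) (h : Fin ℓ → Fin k)
    (ht : ∀ j : Fin ℓ, (t j : ℤ) = ((j : ℕ) + 2) * ((r : ℤ) - 2) - (k : ℤ) + 2)
    (hh : ∀ j : Fin ℓ, (h j : ℕ) = r + (j : ℕ))
    (η : Fin ℓ → F)
    (hη : ∀ j : Fin ℓ, η j ∈ K j.succ ∧ η j ∉ K j.castSucc)
    (α : Fin n → F) (hαK : ∀ i, α i ∈ K 0) (hα : Function.Injective α)
    (hℓsmall : (ℓ : ℝ) ≤ (Real.sqrt n - 3) / 2) :
    Submodule.span (K 0)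
      { v : Fin n → F |
        ∃ a ∈ TRS α k ℓ t h η ∩ { w | ∀ i, w i ∈ K 0 },
        ∃ b ∈ TRS α k ℓ t h η ∩ { w | ∀ i, w i ∈ K 0 },
          v = a * b }
    = Submodule.span (K 0)
        { w : Fin n → F | ∃ i < 2 * k - 1, w = evalVec α (Polynomial.X ^ i) } := by
  classical
  -- ## Real arithmetic consequences
  have hn0 : 0 < n := lt_of_le_of_lt (Nat.zero_le k) hkn
  have hs2 : Real.sqrt n ^ 2 = n := Real.sq_sqrt (by positivity)
  set s : ℝ := Real.sqrt n with hsdef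
  have hs0 : (0:ℝ) ≤ s := Real.sqrt_nonneg n
  have hℓ2b : (ℓ : ℝ) + 2 < 2 * n / k :=
    lt_of_lt_of_le hℓ2 ((min_le_left _ _).trans (min_le_right _ _))
  have hℓ2c : (ℓ : ℝ) + 2 < s - 2 := lt_of_lt_of_le hℓ2 (min_le_right _ _)
  have hs6 : (6:ℝ) < s := by
    have h1 : 4*s + 16 < s^2 := by linarith
    nlinarith [h1, hs0]
  have hk7 : 7 ≤ k := by
    have h7 : ((7:ℕ):ℝ) ≤ ((k:ℕ):ℝ) := by push_cast; nlinarith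
    exact_mod_cast h7
  have hkpos : (0:ℝ) < (k:ℝ) := by positivity
  have hks : s < (k:ℝ) := by nlinarith
  have hnk1 : ((n:ℝ)+1) < ((ℓ:ℝ)+2) * ((k:ℝ) - s) := by
    rw [div_lt_iff₀ (by linarith : (0:ℝ) < (k:ℝ) - s)] at hℓ1
    nlinarith [hℓ1]
  set x : ℝ := ((n:ℝ)+1)/((ℓ:ℝ)+2) with hxdef
  have hℓ2pos : (0:ℝ) < (ℓ:ℝ)+2 := by positivity
  have hxpos : 0 < x := by positivity
  have hxid : ((ℓ:ℝ)+2) * x = (n:ℝ)+1 := by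
    rw [hxdef]; field_simp
  have hrcast : (r:ℝ) = (⌈x⌉₊:ℝ) + 2 := by rw [hr]; push_cast; ring
  have hrlo : x ≤ (r:ℝ) - 2 := by
    have h1 : x ≤ ((⌈x⌉₊:ℕ):ℝ) := Nat.le_ceil x
    linarith
  have hrhi : (r:ℝ) - 2 < x + 1 := by
    have h1 := Nat.ceil_lt_add_one hxpos.le
    linarith
  have hxlt : x < (k:ℝ) - s := by
    rw [hxdef, div_lt_iff₀ hℓ2pos]
    nlinarith [hnk1]
  have hsl : 2*(ℓ:ℝ) + 3 ≤ s := by linarith [hℓsmall]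
  have hxgs : s < x := by
    rw [hxdef, lt_div_iff₀ hℓ2pos]
    have h1 : s * ((ℓ:ℝ)+2) < s * (s-2) := mul_lt_mul_of_pos_left hℓ2c (by linarith)
    nlinarith [h1, hs2]
  -- ## Natural-number arithmetic facts
  have NC : r + 2*ℓ + 1 ≤ k := by
    have hre : ((r + 2*ℓ + 1 : ℕ):ℝ) < ((k + 1 : ℕ):ℝ) := by push_cast; linarith
    exact Nat.lt_succ_iff.mp (Nat.cast_lt.mp hre)
  have ND : 2*ℓ + 6 ≤ r := by
    have hre : ((2*ℓ + 5 : ℕ):ℝ) < ((r : ℕ):ℝ) := by push_cast; linarith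
    have := Nat.cast_lt.mp hre; omega
  have NB : k + 5 ≤ 2*r := by
    have hkl2 : (k:ℝ) * ((ℓ:ℝ)+2) < 2*(n:ℝ) := by
      rw [lt_div_iff₀ hkpos] at hℓ2b; nlinarith [hℓ2b]
    have hre : ((k + 4 : ℕ):ℝ) < ((2*r : ℕ):ℝ) := by push_cast; nlinarith [hkl2, hxid, hrlo, hℓ2pos]
    have := Nat.cast_lt.mp hre; omega
  have NA : (ℓ+1)*(r-2) + 3 ≤ n := by
    have hmul : ((ℓ:ℝ)+1)*((r:ℝ)-2) < ((ℓ:ℝ)+1)*(x+1) :=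
      mul_lt_mul_of_pos_left hrhi (by positivity)
    have hre2 : ((ℓ:ℝ)+1)*(x+1) < (n:ℝ) - 2 := by nlinarith [hxid, hxgs, hs6, hsl]
    have hcast : (((ℓ+1)*(r-2) + 3 : ℕ):ℝ) < ((n + 1 : ℕ):ℝ) := by
      push_cast [Nat.cast_sub (by omega : 2 ≤ r)]
      nlinarith [hmul, hre2]
    have := Nat.cast_lt.mp hcast; omega
  -- ## chain of subfields
  have hK0le : ∀ i : Fin (ℓ+1), K 0 ≤ K i := by
    have key : ∀ m (hm : m < ℓ+1), K 0 ≤ K ⟨m, hm⟩ := by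
      intro m
      induction m with
      | zero =>
        intro hm
        have : (⟨0, hm⟩ : Fin (ℓ+1)) = 0 := by ext; simp
        rw [this]
      | succ m ih =>
        intro hm
        have h1 : m < ℓ + 1 := by omega
        have h2 : m < ℓ := by omega
        have hc := hchain ⟨m, h2⟩
        rw [Fin.castSucc_mk, Fin.succ_mk] at hc
        exact (ih h1).trans hc.le
    intro i
    have := key i.1 i.2
    simpa using this
  have hη0 : ∀ j : Fin ℓ, η j ∉ K 0 := fun j hmem => (hη j).2 (hK0le j.castSucc hmem)
  -- ## twist facts
  have ht3 : ∀ j : Fin ℓ, 3 ≤ t j := by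
    intro j
    have h1 := ht j
    have hj2 : (2:ℤ) ≤ ((j:ℕ):ℤ) + 2 := by omega
    have hr0 : (0:ℤ) ≤ (r:ℤ) - 2 := by
      have : (6:ℕ) ≤ r := by omega
      have : ((6:ℕ):ℤ) ≤ ((r:ℕ):ℤ) := Nat.cast_le.mpr this
      omega
    have h2 : (2:ℤ) * ((r:ℤ) - 2) ≤ (((j:ℕ):ℤ)+2) * ((r:ℤ)-2) :=
      mul_le_mul_of_nonneg_right hj2 hr0
    have h3 : ((k + 5 : ℕ):ℤ) ≤ ((2*r : ℕ):ℤ) := Nat.cast_le.mpr NB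
    have h4 : (3:ℤ) ≤ (t j : ℤ) := by push_cast at h3 ⊢; linarith
    exact_mod_cast h4
  have ht1 : ∀ j : Fin ℓ, 1 ≤ t j := fun j => le_trans (by norm_num) (ht3 j)
  have htn : ∀ j : Fin ℓ, k - 1 + t j < n := by
    intro j
    have h1 := ht j
    have hjl : ((j:ℕ):ℤ) + 2 ≤ (ℓ:ℤ) + 1 := by
      have := j.isLt
      have : ((j:ℕ):ℤ) < (ℓ:ℤ) := Nat.cast_lt.mpr this
      omega
    have hr0 : (0:ℤ) ≤ (r:ℤ) - 2 := by
      have h6 : (6:ℕ) ≤ r := by omega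
      have := (Nat.cast_le (α := ℤ)).mpr h6
      omega
    have h2 : (((j:ℕ):ℤ)+2) * ((r:ℤ)-2) ≤ ((ℓ:ℤ)+1) * ((r:ℤ)-2) :=
      mul_le_mul_of_nonneg_right hjl hr0
    have h3 : ((ℓ:ℤ)+1)*((r:ℤ)-2) + 3 ≤ (n:ℤ) := by
      have := (Nat.cast_le (α := ℤ)).mpr NA
      push_cast [Nat.cast_sub (by omega : 2 ≤ r)] at this
      linarith
    have hcast : ((k - 1 + t j : ℕ) : ℤ) = (k:ℤ) - 1 + (t j : ℤ) := by
      push_cast [Nat.cast_sub (by omega : 1 ≤ k)]; ring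
    have hfin : ((k - 1 + t j : ℕ) : ℤ) < ((n:ℕ):ℤ) := by
      rw [hcast, h1]
      have hk' : (7:ℤ) ≤ (k:ℤ) := by exact_mod_cast hk7
      linarith
    exact_mod_cast hfin
  have htinj : Function.Injective t := by
    intro j j' he
    have h1 := ht j
    have h2 := ht j'
    rw [he, h2] at h1
    have hrne : ((r:ℤ) - 2) ≠ 0 := by
      have h6 : (6:ℕ) ≤ r := by omega
      have := (Nat.cast_le (α := ℤ)).mpr h6
      omega
    have h3 : (((j':ℕ):ℤ)+2) * ((r:ℤ)-2) = (((j:ℕ):ℤ)+2) * ((r:ℤ)-2) := by linarith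
    have h4 := mul_right_cancel₀ hrne h3
    have h5 : ((j':ℕ):ℤ) = ((j:ℕ):ℤ) := by linarith
    exact (Fin.ext (by exact_mod_cast h5)).symm
  -- ## degree of twisted polynomials
  have hdeglt : ∀ u : Fin k → F, (twistedPoly k ℓ t h η u).degree < (n:ℕ) := by
    intro u
    rw [Polynomial.degree_lt_iff_coeff_zero]
    intro m hm
    rw [twistedPoly_coeff]
    have e1 : (∑ i : Fin k, if m = (i:ℕ) then u i else 0) = 0 :=
      Finset.sum_eq_zero fun i _ => if_neg (by have := i.isLt; omega)
    have e2 : (∑ j : Fin ℓ, if m = k - 1 + t j then η j * u (h j) else 0) = 0 :=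
      Finset.sum_eq_zero fun j _ => if_neg (by have := htn j; omega)
    rw [e1, e2, add_zero]
  -- ## subtype ring hom
  set σ : ↥(K 0) →+* F := (K 0).subtype with hσ
  have hσinj : Function.Injective σ := fun a b hab => Subtype.ext hab
  -- ## Step 1: structure of subfield-subcode words
  have step1 : ∀ u : Fin k → F, (∀ i, evalVec α (twistedPoly k ℓ t h η u) i ∈ K 0) →
      ∃ q : Polynomial ↥(K 0), twistedPoly k ℓ t h η u = q.map σ ∧ q.natDegree < k := by
    intro u hu
    set p := twistedPoly k ℓ t h η u with hp
    set β : Fin n → ↥(K 0) := fun i => ⟨α i, hαK i⟩ with hβ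
    have hβinj : Set.InjOn β (Finset.univ : Finset (Fin n)) := by
      intro a _ b _ hab
      exact hα (congrArg Subtype.val hab)
    set w : Fin n → ↥(K 0) := fun i => ⟨p.eval (α i), hu i⟩ with hw
    set q0 : Polynomial ↥(K 0) := Lagrange.interpolate Finset.univ β w with hq0
    have hcardn : ((Finset.univ : Finset (Fin n)).card : WithBot ℕ) = (n : WithBot ℕ) := by
      rw [Finset.card_univ, Fintype.card_fin]
    have hq0deg : q0.degree < ((Finset.univ : Finset (Fin n)).card : ℕ) := by
      rw [hq0]
      exact Lagrange.degree_interpolate_lt _ hβinj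
    have hpq : p = q0.map σ := by
      apply Polynomial.eq_of_degrees_lt_of_eval_index_eq (v := α) Finset.univ
        (fun a _ b _ hab => hα hab)
      · rw [Finset.card_univ, Fintype.card_fin]
        exact hdeglt u
      · rw [Polynomial.degree_map_eq_of_injective hσinj]
        exact hq0deg.trans_eq (by rw [Finset.card_univ, Fintype.card_fin])
      · intro i _
        rw [Polynomial.eval_map, show α i = σ (β i) from rfl, Polynomial.eval₂_hom]
        have hev : Polynomial.eval (β i) q0 = w i := by
          rw [hq0]
          exact Lagrange.eval_interpolate_at_node _ hβinj (Finset.mem_univ i)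
        rw [hev]
        rfl
    have hcoeffK : ∀ m, p.coeff m ∈ K 0 := by
      intro m
      rw [hpq, Polynomial.coeff_map]
      exact (q0.coeff m).2
    have huK : ∀ i : Fin k, u i ∈ K 0 := by
      intro i
      have hc := hcoeffK (i:ℕ)
      rw [hp, twistedPoly_coeff_lo u ht1 i.isLt] at hc
      simpa using hc
    have hz : ∀ j : Fin ℓ, u (h j) = 0 := by
      intro j
      by_contra hne
      have hmem : η j * u (h j) ∈ K 0 := by
        have hc := hcoeffK (k - 1 + t j)
        rwa [hp, twistedPoly_coeff_hi u ht1 htinj j] at hc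
      have hmem2 : η j ∈ K 0 := by
        have h2 := (K 0).mul_mem hmem ((K 0).inv_mem (huK (h j)))
        rwa [mul_assoc, mul_inv_cancel₀ hne, mul_one] at h2
      exact hη0 j hmem2
    have hdegk : p.degree < (k:ℕ) := by
      rw [Polynomial.degree_lt_iff_coeff_zero]
      intro m hm
      rw [hp]
      exact twistedPoly_coeff_hooks_zero_hi u hz hm
    refine ⟨q0, hpq, ?_⟩
    by_cases hq00 : q0 = 0
    · rw [hq00]
      simpa using (by omega : 0 < k)
    · have hd : (q0.map σ).degree < (k:ℕ) := hpq ▸ hdegk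
      rw [Polynomial.degree_map_eq_of_injective hσinj] at hd
      exact (Polynomial.natDegree_lt_iff_degree_lt hq00).mpr hd
  -- ## main argument
  apply le_antisymm
  · rw [Submodule.span_le]
    rintro v ⟨a, ⟨ha1, ha2⟩, b, ⟨hb1, hb2⟩, rfl⟩
    obtain ⟨u1, rfl⟩ := ha1
    obtain ⟨u2, rfl⟩ := hb1
    obtain ⟨q1, he1, hd1⟩ := step1 u1 ha2
    obtain ⟨q2, he2, hd2⟩ := step1 u2 hb2
    have hprod : evalVec α (twistedPoly k ℓ t h η u1) * evalVec α (twistedPoly k ℓ t h η u2)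
        = fun i => ((q1*q2).map σ).eval (α i) := by
      funext i
      simp [evalVec, he1, he2, Polynomial.map_mul, Pi.mul_apply]
    rw [hprod]
    have hdeg : ((q1*q2).map σ).natDegree < 2*k - 1 := by
      have h1 : ((q1*q2).map σ).natDegree ≤ (q1*q2).natDegree := Polynomial.natDegree_map_le
      have h2 : (q1*q2).natDegree ≤ q1.natDegree + q2.natDegree := Polynomial.natDegree_mul_le
      omega
    have heval : (fun i => ((q1*q2).map σ).eval (α i))
        = ∑ m ∈ Finset.range (2*k-1), fun i => ((q1*q2).map σ).coeff m * (α i)^m := by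
      funext i
      rw [Finset.sum_apply]
      exact Polynomial.eval_eq_sum_range' hdeg (α i)
    rw [heval]
    apply Submodule.sum_mem
    intro m hm
    have hcm : ((q1*q2).map σ).coeff m ∈ K 0 := by
      rw [Polynomial.coeff_map]
      exact ((q1*q2).coeff m).2
    have hgen : evalVec α (Polynomial.X ^ m)
        ∈ {w : Fin n → F | ∃ i < 2*k-1, w = evalVec α (Polynomial.X^i)} :=
      ⟨m, Finset.mem_range.mp hm, rfl⟩
    have hsm := Submodule.smul_mem
      (Submodule.span (K 0) {w : Fin n → F | ∃ i < 2*k-1, w = evalVec α (Polynomial.X^i)})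
      (⟨_, hcm⟩ : ↥(K 0)) (Submodule.subset_span hgen)
    convert hsm using 1
    funext i
    show ((q1*q2).map σ).coeff m * (α i)^m = _
    simp only [Pi.smul_apply, evalVec, Polynomial.eval_pow, Polynomial.eval_X]
    rfl
  · rw [Submodule.span_le]
    rintro w ⟨m, hm, rfl⟩
    obtain ⟨i, j, hij, hik, hjk, hiH, hjH⟩ := sum_decomp k ℓ r m ND NC hm
    have mk_mem : ∀ (i0 : ℕ) (hi0 : i0 < k), (i0 < r ∨ r + ℓ ≤ i0) →
        evalVec α (Polynomial.X ^ i0) ∈ TRS α k ℓ t h η ∩ {w : Fin n → F | ∀ i', w i' ∈ K 0} := by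
      intro i0 hi0 hH
      have hna : ∀ j' : Fin ℓ, h j' ≠ (⟨i0, hi0⟩ : Fin k) := by
        intro j' he
        have h1 := hh j'
        have h2 : (h j' : ℕ) = i0 := by rw [he]
        have := j'.isLt
        omega
      constructor
      · exact ⟨Pi.single ⟨i0, hi0⟩ 1, by rw [twistedPoly_single ⟨i0, hi0⟩ hna]⟩
      · intro i'
        simp only [evalVec, Polynomial.eval_pow, Polynomial.eval_X]
        exact pow_mem (hαK i') i0
    apply Submodule.subset_span
    refine ⟨evalVec α (Polynomial.X^i), mk_mem i hik hiH,
      evalVec α (Polynomial.X^j), mk_mem j hjk hjH, ?_⟩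
    funext i'
    simp [evalVec, Pi.mul_apply, ← pow_add, hij]
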